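/- Let α ∈ (0,1], let κ be a real number with 0 ≤ κ ≤ α/2, let b be a populated pre-multi-index, and let 𝐝 = (𝔨₀,𝔨₁,k₀,k₁) be a derivator such that b^{𝔨₀}_{k₀} ≥ 1. Set m = k₀ + 1 − k₁ (so m ∈ {0,1}). Then |b| + (α−1−κ)·(𝔰(b^𝔠) + 2𝔰(b^𝔢) + 𝔰(b^𝔣) − m) − m ≥ −2 + α − κ. -/

import Mathlib

/-- The seven labels 𝔅 = {𝔟,𝔠,𝔡,𝔢,𝔣,𝔤,𝔥}. -/
inductive Lbl : Type
  | b | c | d | e | f | g | h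
  deriving DecidableEq

instance instFintypeLbl : Fintype Lbl where
  elems := {Lbl.b, Lbl.c, Lbl.d, Lbl.e, Lbl.f, Lbl.g, Lbl.h}
  complete := by intro x; cases x <;> simp

/-- Size 𝔰(q) = Σᵢ qᵢ of a finitely supported sequence. -/
def seqSize (q : ℕ →₀ ℕ) : ℕ := q.sum fun _ n => n

/-- Order 𝔬(q) = Σᵢ i·qᵢ of a finitely supported sequence. -/
def seqOrder (q : ℕ →₀ ℕ) : ℕ := q.sum fun i n => i * n

/-- Length 𝔩(q) = max of the support of q (0 if q = 0). -/
def seqLen (q : ℕ →₀ ℕ) : ℕ := q.support.sup id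

/-- A pre-multi-index: a family of seven finitely supported sequences. -/
abbrev PMI : Type := Lbl → (ℕ →₀ ℕ)

/-- Size of a pre-multi-index. -/
def pmiSize (a : PMI) : ℕ := ∑ k : Lbl, seqSize (a k)

/-- Order of a pre-multi-index. -/
def pmiOrder (a : PMI) : ℕ :=
  (∑ k : Lbl, seqOrder (a k)) + seqSize (a Lbl.d) + seqSize (a Lbl.f)
    + 2 * seqSize (a Lbl.g)

/-- Length of a pre-multi-index. -/
def pmiLen (a : PMI) : ℕ := Finset.univ.sup fun k : Lbl => seqLen (a k)

/-- A pre-multi-index is populated if 𝔰(a) = 𝔬(a) + 1. -/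
def Populated (a : PMI) : Prop := pmiSize a = pmiOrder a + 1

/-- The scaling |a| of a pre-multi-index, for a real parameter α. -/
noncomputable def scaling (α : ℝ) (a : PMI) : ℝ :=
  -(2 - α) * (pmiSize a : ℝ) + 2 * (pmiOrder a : ℝ)
    + (2 - α) * ((seqSize (a Lbl.b) : ℝ) + (seqSize (a Lbl.c) : ℝ) + (seqSize (a Lbl.e) : ℝ))
    + (1 - α) * ((seqSize (a Lbl.d) : ℝ) + (seqSize (a Lbl.f) : ℝ))
    - α * (seqSize (a Lbl.g) : ℝ)

/-- 1^𝔨_k : the pre-multi-index whose only nonzero entry is a single 1 in the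
𝔨-component at index k. -/
noncomputable def onePMI (k : Lbl) (n : ℕ) : PMI :=
  fun k' => if k' = k then Finsupp.single n 1 else 0

/-- A derivator (𝔨₀,𝔨₁,k₀,k₁). -/
def IsDerivator (l₀ l₁ : Lbl) (k₀ k₁ : ℕ) : Prop :=
  (l₀ = l₁ ∧ k₁ = k₀ + 1) ∨
    (((l₀ = Lbl.c ∧ l₁ = Lbl.d) ∨ (l₀ = Lbl.e ∧ l₁ = Lbl.f) ∨ (l₀ = Lbl.f ∧ l₁ = Lbl.g))
      ∧ k₁ = k₀)

lemma sum_Lbl (f : Lbl → ℕ) :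
    ∑ k : Lbl, f k = f .b + f .c + f .d + f .e + f .f + f .g + f .h := by
  show Finset.sum _ f = _
  rw [show (Finset.univ : Finset Lbl) = {Lbl.b, Lbl.c, Lbl.d, Lbl.e, Lbl.f, Lbl.g, Lbl.h} from rfl]
  simp [Finset.sum_insert, Finset.mem_insert]
  ring

lemma le_seqSize (q : ℕ →₀ ℕ) (k : ℕ) : q k ≤ seqSize q := by
  unfold seqSize Finsupp.sum
  by_cases h : q k = 0
  · simp [h]
  · exact Finset.single_le_sum (fun i _ => Nat.zero_le _) (Finsupp.mem_support_iff.mpr h)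

theorem stmt9 (α κ : ℝ) (hα : α ∈ Set.Ioc (0:ℝ) 1) (hκ0 : 0 ≤ κ) (hκ : κ ≤ α / 2)
    (b : PMI) (hb : Populated b) (l₀ l₁ : Lbl) (k₀ k₁ : ℕ)
    (hd : IsDerivator l₀ l₁ k₀ k₁) (hge : 1 ≤ (b l₀) k₀) :
    -2 + α - κ ≤
      scaling α b
        + (α - 1 - κ) * ((seqSize (b Lbl.c) : ℝ) + 2 * (seqSize (b Lbl.e) : ℝ)
            + (seqSize (b Lbl.f) : ℝ) - ((k₀ + 1 - k₁ : ℕ) : ℝ))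
        - ((k₀ + 1 - k₁ : ℕ) : ℝ) := by
  obtain ⟨hα0, hα1⟩ := hα
  have hS : (pmiSize b : ℝ) = ((seqSize (b Lbl.b)) : ℝ) + ((seqSize (b Lbl.c)) : ℝ) + ((seqSize (b Lbl.d)) : ℝ) + ((seqSize (b Lbl.e)) : ℝ) + ((seqSize (b Lbl.f)) : ℝ) + ((seqSize (b Lbl.g)) : ℝ) + ((seqSize (b Lbl.h)) : ℝ) := by
    unfold pmiSize
    rw [sum_Lbl]
    push_cast
    ring
  have hO : ((seqSize (b Lbl.d)) : ℝ) + ((seqSize (b Lbl.f)) : ℝ) + 2 * ((seqSize (b Lbl.g)) : ℝ) ≤ (pmiOrder b : ℝ) := by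
    have h : seqSize (b Lbl.d) + seqSize (b Lbl.f) + 2 * seqSize (b Lbl.g) ≤ pmiOrder b := by
      unfold pmiOrder; omega
    exact_mod_cast h
  have hpop : (pmiSize b : ℝ) = (pmiOrder b : ℝ) + 1 := by exact_mod_cast hb
  have hge' : (1 : ℝ) ≤ (seqSize (b l₀) : ℝ) := by
    exact_mod_cast le_trans hge (le_seqSize _ _)
  have h0b : (0:ℝ) ≤ ((seqSize (b Lbl.b)) : ℝ) := Nat.cast_nonneg _
  have h0c : (0:ℝ) ≤ ((seqSize (b Lbl.c)) : ℝ) := Nat.cast_nonneg _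
  have h0d : (0:ℝ) ≤ ((seqSize (b Lbl.d)) : ℝ) := Nat.cast_nonneg _
  have h0e : (0:ℝ) ≤ ((seqSize (b Lbl.e)) : ℝ) := Nat.cast_nonneg _
  have h0f : (0:ℝ) ≤ ((seqSize (b Lbl.f)) : ℝ) := Nat.cast_nonneg _
  have h0g : (0:ℝ) ≤ ((seqSize (b Lbl.g)) : ℝ) := Nat.cast_nonneg _
  have h0h : (0:ℝ) ≤ ((seqSize (b Lbl.h)) : ℝ) := Nat.cast_nonneg _
  have hακ : (0:ℝ) ≤ α - κ := by linarith
  have hkey : ((seqSize (b Lbl.g)) : ℝ) + 1 ≤ ((seqSize (b Lbl.b)) : ℝ) + ((seqSize (b Lbl.c)) : ℝ) + ((seqSize (b Lbl.e)) : ℝ) + ((seqSize (b Lbl.h)) : ℝ) := by linarith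
  have PB : (0:ℝ) ≤ (2 - α + κ) * ((seqSize (b Lbl.b)) : ℝ) := mul_nonneg (by linarith) h0b
  have PC : (0:ℝ) ≤ (α - κ) * ((seqSize (b Lbl.c)) : ℝ) := mul_nonneg hακ h0c
  have PE : (0:ℝ) ≤ (α - κ) * ((seqSize (b Lbl.e)) : ℝ) := mul_nonneg hακ h0e
  have PF : (0:ℝ) ≤ (α - κ) * ((seqSize (b Lbl.f)) : ℝ) := mul_nonneg hακ h0f
  have PH : (0:ℝ) ≤ κ * ((seqSize (b Lbl.h)) : ℝ) := mul_nonneg hκ0 h0h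
  have PH2 : (0:ℝ) ≤ α * ((seqSize (b Lbl.h)) : ℝ) := mul_nonneg (le_of_lt hα0) h0h
  have B : (0:ℝ) ≤ (α - κ) * (((seqSize (b Lbl.b)) : ℝ) + ((seqSize (b Lbl.c)) : ℝ) + ((seqSize (b Lbl.e)) : ℝ) + ((seqSize (b Lbl.h)) : ℝ) - 1) :=
    mul_nonneg hακ (by linarith)
  have hOS : (pmiOrder b : ℝ) = ((seqSize (b Lbl.b)) : ℝ) + ((seqSize (b Lbl.c)) : ℝ) + ((seqSize (b Lbl.d)) : ℝ) + ((seqSize (b Lbl.e)) : ℝ) + ((seqSize (b Lbl.f)) : ℝ) + ((seqSize (b Lbl.g)) : ℝ) + ((seqSize (b Lbl.h)) : ℝ) - 1 := by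
    rw [hS] at hpop; linarith
  unfold scaling
  rw [hS, hOS]
  rw [hOS] at hO
  rcases hd with ⟨_, hk⟩ | ⟨hl, hk⟩
  · have hm : ((k₀ + 1 - k₁ : ℕ) : ℝ) = 0 := by
      rw [hk]; simp
    rw [hm]
    linarith [hS, hO, hpop, PB, PC, PE, PF, PH, B]
  · have hm : ((k₀ + 1 - k₁ : ℕ) : ℝ) = 1 := by
      rw [hk, show k₀ + 1 - k₀ = 1 from by omega]; norm_num
    rw [hm]
    rcases hl with ⟨h1, _⟩ | ⟨h1, _⟩ | ⟨h1, _⟩ <;> rw [h1] at hge'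
    · have F : (0:ℝ) ≤ (α - κ) * (((seqSize (b Lbl.c)) : ℝ) - 1) := mul_nonneg hακ (by linarith)
      linarith [hS, hO, hpop, PB, PE, PF, PH2, F, hge']
    · have F : (0:ℝ) ≤ (α - κ) * (((seqSize (b Lbl.e)) : ℝ) - 1) := mul_nonneg hακ (by linarith)
      linarith [hS, hO, hpop, PB, PC, PF, PH2, F]
    · have F : (0:ℝ) ≤ (α - κ) * (((seqSize (b Lbl.f)) : ℝ) - 1) := mul_nonneg hακ (by linarith)
      linarith [hS, hO, hpop, PB, PC, PE, PH, B, F]
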